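/- The AIPW asymptotic variance is minimized at the conditional mean: Under the setting of the asymptotic-variance formula — X : Ω → 𝒳, Y square-integrable, μ₀ a version of E[Y | σ(X)], ρ₀ ∈ (0,1), f : 𝒳 → ℝ measurable with f(X) square-integrable, f̃ := f(X) − E[f(X)] + E[Y], ψ₀ := E[Y], D^L := f̃ − ψ₀ + ρ₀⁻¹·(Y − f̃) — one has ρ₀·Var[D^L] + (1−ρ₀)·Var[f̃] ≥ Var[μ₀] + ρ₀⁻¹·E[(Y − μ₀)²], with equality if and only if f̃ = μ₀ almost surely. -/

import Mathlib

open MeasureTheory ProbabilityTheory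

open scoped ENNReal

private lemma int_mul_L2 {Ω : Type*} [MeasurableSpace Ω] {P : Measure Ω} {g h : Ω → ℝ}
    (hg : MemLp g 2 P) (hh : MemLp h 2 P) : Integrable (fun ω => g ω * h ω) P := by
  have h1 : (1 : ℝ≥0∞) / 1 = 1 / 2 + 1 / 2 := by
    rw [ENNReal.add_halves]; simp
  haveI : ENNReal.HolderTriple 2 2 1 := ⟨by rw [inv_one]; exact ENNReal.inv_two_add_inv_two⟩
  have := hh.smul (r := 1) hg
  rw [memLp_one_iff_integrable] at this
  exact this

private lemma integral_lin_expand {Ω : Type*} [MeasurableSpace Ω]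
    (P : Measure Ω) [IsProbabilityMeasure P]
    {u v w : Ω → ℝ} (hu : MemLp u 2 P) (hv : MemLp v 2 P) (hw : MemLp w 2 P)
    (a b d c : ℝ) :
    ∫ ω, (a * u ω + b * v ω + d * w ω + c) ∂P
      = a * ∫ ω, u ω ∂P + b * ∫ ω, v ω ∂P + d * ∫ ω, w ω ∂P + c := by
  have iu := hu.integrable one_le_two
  have iv := hv.integrable one_le_two
  have iw := hw.integrable one_le_two
  have j2 : Integrable (fun ω => a * u ω + b * v ω) P := (iu.const_mul a).add (iv.const_mul b)
  have j1 : Integrable (fun ω => a * u ω + b * v ω + d * w ω) P := j2.add (iw.const_mul d)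
  rw [integral_add j1 (integrable_const c), integral_add j2 (iw.const_mul d),
    integral_add (iu.const_mul a) (iv.const_mul b), integral_const_mul, integral_const_mul,
    integral_const_mul]
  simp [measure_univ]

private lemma integral_sq_expand {Ω : Type*} [MeasurableSpace Ω]
    (P : Measure Ω) [IsProbabilityMeasure P]
    {u v w : Ω → ℝ} (hu : MemLp u 2 P) (hv : MemLp v 2 P) (hw : MemLp w 2 P)
    (a b d c : ℝ) :
    ∫ ω, (a * u ω + b * v ω + d * w ω + c) ^ 2 ∂P
      = a^2 * ∫ ω, u ω * u ω ∂P + b^2 * ∫ ω, v ω * v ω ∂P + d^2 * ∫ ω, w ω * w ω ∂P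
        + 2*a*b * ∫ ω, u ω * v ω ∂P + 2*a*d * ∫ ω, u ω * w ω ∂P
        + 2*b*d * ∫ ω, v ω * w ω ∂P
        + 2*a*c * ∫ ω, u ω ∂P + 2*b*c * ∫ ω, v ω ∂P + 2*d*c * ∫ ω, w ω ∂P + c^2 := by
  have iu := hu.integrable one_le_two
  have iv := hv.integrable one_le_two
  have iw := hw.integrable one_le_two
  have iuu := int_mul_L2 hu hu
  have ivv := int_mul_L2 hv hv
  have iww := int_mul_L2 hw hw
  have iuv := int_mul_L2 hu hv
  have iuw := int_mul_L2 hu hw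
  have ivw := int_mul_L2 hv hw
  have t9 : Integrable (fun ω => 2*d*c * w ω + c^2) P :=
    (iw.const_mul _).add (integrable_const _)
  have t8 : Integrable (fun ω => 2*b*c * v ω + (2*d*c * w ω + c^2)) P :=
    (iv.const_mul _).add t9
  have t7 : Integrable (fun ω => 2*a*c * u ω + (2*b*c * v ω + (2*d*c * w ω + c^2))) P :=
    (iu.const_mul _).add t8
  have t6 : Integrable (fun ω => 2*b*d * (v ω * w ω)
      + (2*a*c * u ω + (2*b*c * v ω + (2*d*c * w ω + c^2)))) P :=
    (ivw.const_mul _).add t7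
  have t5 : Integrable (fun ω => 2*a*d * (u ω * w ω) + (2*b*d * (v ω * w ω)
      + (2*a*c * u ω + (2*b*c * v ω + (2*d*c * w ω + c^2))))) P :=
    (iuw.const_mul _).add t6
  have t4 : Integrable (fun ω => 2*a*b * (u ω * v ω) + (2*a*d * (u ω * w ω)
      + (2*b*d * (v ω * w ω)
      + (2*a*c * u ω + (2*b*c * v ω + (2*d*c * w ω + c^2)))))) P :=
    (iuv.const_mul _).add t5
  have t3 : Integrable (fun ω => d^2 * (w ω * w ω) + (2*a*b * (u ω * v ω)
      + (2*a*d * (u ω * w ω) + (2*b*d * (v ω * w ω)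
      + (2*a*c * u ω + (2*b*c * v ω + (2*d*c * w ω + c^2))))))) P :=
    (iww.const_mul _).add t4
  have t2 : Integrable (fun ω => b^2 * (v ω * v ω) + (d^2 * (w ω * w ω)
      + (2*a*b * (u ω * v ω) + (2*a*d * (u ω * w ω) + (2*b*d * (v ω * w ω)
      + (2*a*c * u ω + (2*b*c * v ω + (2*d*c * w ω + c^2)))))))) P :=
    (ivv.const_mul _).add t3
  calc ∫ ω, (a * u ω + b * v ω + d * w ω + c) ^ 2 ∂P
      = ∫ ω, (a^2 * (u ω * u ω) + (b^2 * (v ω * v ω) + (d^2 * (w ω * w ω)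
          + (2*a*b * (u ω * v ω) + (2*a*d * (u ω * w ω) + (2*b*d * (v ω * w ω)
          + (2*a*c * u ω + (2*b*c * v ω + (2*d*c * w ω + c^2))))))))) ∂P :=
        integral_congr_ae (Filter.Eventually.of_forall fun ω => by ring)
    _ = _ := by
        rw [integral_add (iuu.const_mul _) t2, integral_add (ivv.const_mul _) t3,
          integral_add (iww.const_mul _) t4, integral_add (iuv.const_mul _) t5,
          integral_add (iuw.const_mul _) t6, integral_add (ivw.const_mul _) t7,
          integral_add (iu.const_mul _) t8, integral_add (iv.const_mul _) t9,
          integral_add (iw.const_mul _) (integrable_const _)]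
        simp only [integral_const_mul, integral_const, measure_univ, ENNReal.toReal_one, probReal_univ,
          smul_eq_mul, one_mul]
        ring

private theorem helperA {Ω : Type*} {m : MeasurableSpace Ω} [mΩ : MeasurableSpace Ω] (hm : m ≤ mΩ)
    (P : Measure Ω) [IsProbabilityMeasure P]
    (Y : Ω → ℝ) (hY : MemLp Y 2 P)
    (μ₀ : Ω → ℝ) (hμ₀ : μ₀ =ᵐ[P] P[Y | m]) :
    MemLp μ₀ 2 P ∧
    (∀ (h : Ω → ℝ), StronglyMeasurable[m] h → MemLp h 2 P →
      ∫ ω, h ω * Y ω ∂P = ∫ ω, h ω * μ₀ ω ∂P) ∧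
    (∫ ω, μ₀ ω * Y ω ∂P = ∫ ω, μ₀ ω * μ₀ ω ∂P) ∧
    (∫ ω, μ₀ ω ∂P = ∫ ω, Y ω ∂P) := by
  haveI : SigmaFinite (P.trim hm) := by
    have : IsFiniteMeasure (P.trim hm) := isFiniteMeasure_trim hm
    infer_instance
  have hYint : Integrable Y P := hY.integrable one_le_two
  have hcond : ((condExpL2 ℝ ℝ hm (hY.toLp Y) : Lp ℝ 2 P) : Ω → ℝ) =ᵐ[P] P[Y|m] := by
    refine ae_eq_condExp_of_forall_setIntegral_eq hm hYint
      (fun s _ _ => ((Lp.memLp _).integrable one_le_two).integrableOn)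
      (fun s hs hμs => ?_) (aestronglyMeasurable_condExpL2 hm _)
    rw [integral_condExpL2_eq hm (hY.toLp Y) hs hμs.ne]
    exact setIntegral_congr_ae (hm s hs) ((hY.coeFn_toLp).mono fun x hx _ => hx)
  have hμcL2 : MemLp (P[Y|m]) 2 P := (Lp.memLp _).ae_eq hcond
  have hμ₀L2 : MemLp μ₀ 2 P := hμcL2.ae_eq hμ₀.symm
  have orth : ∀ (h : Ω → ℝ), StronglyMeasurable[m] h → MemLp h 2 P →
      ∫ ω, h ω * Y ω ∂P = ∫ ω, h ω * μ₀ ω ∂P := by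
    intro h hhm hhL2
    have hmul : Integrable (fun ω => h ω * Y ω) P := int_mul_L2 hhL2 hY
    have h1 : P[(h * Y)|m] =ᵐ[P] h * P[Y|m] :=
      condExp_mul_of_stronglyMeasurable_left hhm hmul hYint
    calc ∫ ω, h ω * Y ω ∂P = ∫ ω, (P[(h * Y)|m]) ω ∂P := (integral_condExp hm).symm
      _ = ∫ ω, (h * P[Y|m]) ω ∂P := integral_congr_ae h1
      _ = ∫ ω, h ω * μ₀ ω ∂P := integral_congr_ae <| by
            filter_upwards [hμ₀] with ω hω
            simp [hω]
  refine ⟨hμ₀L2, orth, ?_, ?_⟩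
  · have h1 := orth _ stronglyMeasurable_condExp hμcL2
    have h2 : ∫ ω, μ₀ ω * Y ω ∂P = ∫ ω, (P[Y|m]) ω * Y ω ∂P :=
      integral_congr_ae <| by filter_upwards [hμ₀] with ω hω; rw [hω]
    have h3 : ∫ ω, (P[Y|m]) ω * μ₀ ω ∂P = ∫ ω, μ₀ ω * μ₀ ω ∂P :=
      integral_congr_ae <| by filter_upwards [hμ₀] with ω hω; rw [hω]
    rw [h2, h1, h3]
  · rw [integral_congr_ae hμ₀, integral_condExp hm]

private theorem helperB {Ω : Type*} {m : MeasurableSpace Ω} [mΩ : MeasurableSpace Ω] (hm : m ≤ mΩ)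
    (P : Measure Ω) [IsProbabilityMeasure P]
    (Y : Ω → ℝ) (hY : MemLp Y 2 P)
    (μ₀ : Ω → ℝ) (hμ₀ : μ₀ =ᵐ[P] P[Y | m])
    (ρ₀ : ℝ) (hρ : ρ₀ ∈ Set.Ioo (0 : ℝ) 1)
    (u : Ω → ℝ) (hum : StronglyMeasurable[m] u) (huL2 : MemLp u 2 P)
    (ft : Ω → ℝ)
    (hft : ft = fun ω => u ω - (∫ ω', u ω' ∂P) + ∫ ω', Y ω' ∂P)
    (DL : Ω → ℝ)
    (hDL : DL = fun ω => ft ω - (∫ ω', Y ω' ∂P) + ρ₀⁻¹ * (Y ω - ft ω)) :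
    (variance μ₀ P + ρ₀⁻¹ * (∫ ω, (Y ω - μ₀ ω) ^ 2 ∂P)
      ≤ ρ₀ * variance DL P + (1 - ρ₀) * variance ft P)
    ∧ (ρ₀ * variance DL P + (1 - ρ₀) * variance ft P
        = variance μ₀ P + ρ₀⁻¹ * (∫ ω, (Y ω - μ₀ ω) ^ 2 ∂P)
      ↔ ft =ᵐ[P] μ₀) := by
  obtain ⟨hρ0, hρ1⟩ := hρ
  obtain ⟨hμ₀L2, orth, oww, oμE⟩ := helperA hm P Y hY μ₀ hμ₀
  have ouv : ∫ ω, u ω * Y ω ∂P = ∫ ω, u ω * μ₀ ω ∂P := orth u hum huL2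
  have ovw : ∫ ω, Y ω * μ₀ ω ∂P = ∫ ω, μ₀ ω * μ₀ ω ∂P := by
    calc ∫ ω, Y ω * μ₀ ω ∂P = ∫ ω, μ₀ ω * Y ω ∂P :=
          integral_congr_ae (Filter.Eventually.of_forall fun ω => mul_comm _ _)
      _ = _ := oww
  have hftL2 : MemLp ft 2 P := by
    rw [hft]; exact (huL2.sub (memLp_const _)).add (memLp_const _)
  have hDLL2 : MemLp DL 2 P := by
    rw [hDL]; exact (hftL2.sub (memLp_const _)).add ((hY.sub hftL2).const_mul _)
  have hρne : ρ₀ ≠ 0 := ne_of_gt hρ0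
  -- coefficients
  have eft2 : ∫ ω, ft ω ^ 2 ∂P
      = ∫ ω, (1 * u ω + 0 * Y ω + 0 * μ₀ ω + ((∫ ω', Y ω' ∂P) - ∫ ω', u ω' ∂P)) ^ 2 ∂P :=
    integral_congr_ae (Filter.Eventually.of_forall fun ω => by rw [hft]; ring)
  have eft1 : ∫ ω, ft ω ∂P
      = ∫ ω, (1 * u ω + 0 * Y ω + 0 * μ₀ ω + ((∫ ω', Y ω' ∂P) - ∫ ω', u ω' ∂P)) ∂P :=
    integral_congr_ae (Filter.Eventually.of_forall fun ω => by rw [hft]; ring)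
  have eDL2 : ∫ ω, DL ω ^ 2 ∂P
      = ∫ ω, ((1 - ρ₀⁻¹) * u ω + ρ₀⁻¹ * Y ω + 0 * μ₀ ω
          + ((1 - ρ₀⁻¹) * ((∫ ω', Y ω' ∂P) - ∫ ω', u ω' ∂P) - ∫ ω', Y ω' ∂P)) ^ 2 ∂P :=
    integral_congr_ae (Filter.Eventually.of_forall fun ω => by rw [hDL, hft]; ring)
  have eDL1 : ∫ ω, DL ω ∂P
      = ∫ ω, ((1 - ρ₀⁻¹) * u ω + ρ₀⁻¹ * Y ω + 0 * μ₀ ω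
          + ((1 - ρ₀⁻¹) * ((∫ ω', Y ω' ∂P) - ∫ ω', u ω' ∂P) - ∫ ω', Y ω' ∂P)) ∂P :=
    integral_congr_ae (Filter.Eventually.of_forall fun ω => by rw [hDL, hft]; ring)
  have eI : ∫ ω, (Y ω - μ₀ ω) ^ 2 ∂P
      = ∫ ω, (0 * u ω + 1 * Y ω + (-1) * μ₀ ω + 0) ^ 2 ∂P :=
    integral_congr_ae (Filter.Eventually.of_forall fun ω => by ring)
  have eJ : ∫ ω, (ft ω - μ₀ ω) ^ 2 ∂P
      = ∫ ω, (1 * u ω + 0 * Y ω + (-1) * μ₀ ω + ((∫ ω', Y ω' ∂P) - ∫ ω', u ω' ∂P)) ^ 2 ∂P :=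
    integral_congr_ae (Filter.Eventually.of_forall fun ω => by rw [hft]; ring)
  have eμ2 : ∫ ω, μ₀ ω ^ 2 ∂P = ∫ ω, μ₀ ω * μ₀ ω ∂P :=
    integral_congr_ae (Filter.Eventually.of_forall fun ω => by ring)
  -- the key identity
  have key : ρ₀ * variance DL P + (1 - ρ₀) * variance ft P
      = variance μ₀ P + ρ₀⁻¹ * (∫ ω, (Y ω - μ₀ ω) ^ 2 ∂P)
        + (ρ₀⁻¹ - 1) * (∫ ω, (ft ω - μ₀ ω) ^ 2 ∂P) := by
    rw [variance_eq_sub hDLL2, variance_eq_sub hftL2, variance_eq_sub hμ₀L2]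
    simp only [Pi.pow_apply]
    rw [eft2, eft1, eDL2, eDL1, eI, eJ, eμ2,
      integral_sq_expand P huL2 hY hμ₀L2,
      integral_sq_expand P huL2 hY hμ₀L2,
      integral_sq_expand P huL2 hY hμ₀L2,
      integral_sq_expand P huL2 hY hμ₀L2,
      integral_lin_expand P huL2 hY hμ₀L2,
      integral_lin_expand P huL2 hY hμ₀L2,
      oμE, ← ouv, ovw]
    field_simp
    ring
  have hJnn : 0 ≤ ∫ ω, (ft ω - μ₀ ω) ^ 2 ∂P :=
    integral_nonneg fun ω => sq_nonneg _
  have hcoef : 0 < ρ₀⁻¹ - 1 := by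
    have h1 : (1 : ℝ) < ρ₀⁻¹ := by
      rw [lt_inv_comm₀] <;> simp [hρ0, hρ1]
    linarith
  constructor
  · rw [key]
    nlinarith [mul_nonneg hcoef.le hJnn]
  · rw [key]
    constructor
    · intro h
      have hJ0 : (ρ₀⁻¹ - 1) * (∫ ω, (ft ω - μ₀ ω) ^ 2 ∂P) = 0 := by linarith
      have hJ0' : ∫ ω, (ft ω - μ₀ ω) ^ 2 ∂P = 0 := by
        rcases mul_eq_zero.mp hJ0 with h' | h'
        · exact absurd h' (ne_of_gt hcoef)
        · exact h'
      have hint : Integrable (fun ω => (ft ω - μ₀ ω) ^ 2) P := by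
        have := int_mul_L2 (hftL2.sub hμ₀L2) (hftL2.sub hμ₀L2)
        exact this.congr (Filter.Eventually.of_forall fun ω => by
          simp only [Pi.sub_apply]; ring)
      have := (integral_eq_zero_iff_of_nonneg
        (fun ω => sq_nonneg (ft ω - μ₀ ω)) hint).mp hJ0'
      filter_upwards [this] with ω hω
      have : (ft ω - μ₀ ω) ^ 2 = 0 := hω
      have := pow_eq_zero_iff (n := 2) (by norm_num) |>.mp this
      linarith
    · intro h
      have hJ0 : ∫ ω, (ft ω - μ₀ ω) ^ 2 ∂P = 0 := by
        have : (fun ω => (ft ω - μ₀ ω) ^ 2) =ᵐ[P] (fun _ => (0:ℝ)) := by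
          filter_upwards [h] with ω hω
          simp [hω]
        rw [integral_congr_ae this, integral_zero]
      rw [hJ0]
      ring

/-- The AIPW asymptotic variance is minimized at the conditional mean:
with `f̃ = f(X) − E[f(X)] + E[Y]`, `ψ₀ = E[Y]`, and
`D^L = f̃ − ψ₀ + ρ₀⁻¹·(Y − f̃)`, one has
`ρ₀·Var[D^L] + (1−ρ₀)·Var[f̃] ≥ Var[μ₀] + ρ₀⁻¹·E[(Y − μ₀)²]`,
with equality if and only if `f̃ = μ₀` almost surely. -/
theorem aipw_asymptotic_variance_minimized_at_conditional_mean
    {Ω 𝒳 : Type*} [MeasurableSpace Ω] [MeasurableSpace 𝒳]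
    (P : Measure Ω) [IsProbabilityMeasure P]
    (X : Ω → 𝒳) (hX : Measurable X)
    (Y : Ω → ℝ) (hY : MemLp Y 2 P)
    (μ₀ : Ω → ℝ)
    (hμ₀ : μ₀ =ᵐ[P] P[Y | MeasurableSpace.comap X inferInstance])
    (ρ₀ : ℝ) (hρ : ρ₀ ∈ Set.Ioo (0 : ℝ) 1)
    (f : 𝒳 → ℝ) (hf : Measurable f)
    (hfL2 : MemLp (fun ω => f (X ω)) 2 P)
    (ft : Ω → ℝ)
    (hft : ft = fun ω => f (X ω) - (∫ ω', f (X ω') ∂P) + ∫ ω', Y ω' ∂P)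
    (DL : Ω → ℝ)
    (hDL : DL = fun ω => ft ω - (∫ ω', Y ω' ∂P) + ρ₀⁻¹ * (Y ω - ft ω)) :
    (variance μ₀ P + ρ₀⁻¹ * (∫ ω, (Y ω - μ₀ ω) ^ 2 ∂P)
      ≤ ρ₀ * variance DL P + (1 - ρ₀) * variance ft P)
    ∧ (ρ₀ * variance DL P + (1 - ρ₀) * variance ft P
        = variance μ₀ P + ρ₀⁻¹ * (∫ ω, (Y ω - μ₀ ω) ^ 2 ∂P)
      ↔ ft =ᵐ[P] μ₀) := by
  have hm := measurable_iff_comap_le.mp hX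
  have hum : StronglyMeasurable[MeasurableSpace.comap X inferInstance] (fun ω => f (X ω)) := by
    have : @Measurable Ω ℝ (MeasurableSpace.comap X inferInstance) _ (fun ω => f (X ω)) :=
      fun s hs => ⟨f ⁻¹' s, hf hs, rfl⟩
    exact this.stronglyMeasurable
  exact helperB hm P Y hY μ₀ hμ₀ ρ₀ hρ _ hum hfL2 ft hft DL hDL
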